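/- Let n ≥ 2, 1 < p < p_* (p_* = ∞ if n = 2, (n+2)/(n-2) if n ≥ 3), β = 1/(p-1), ρ = e^{-|x|²/4}. Suppose a nonnegative C² function u on ℝⁿ satisfies the three integral identities: (i) ∫ρ|∇u|² + βρu² - ρu^{p+1} = 0; (ii) ∫|x|²|∇u|²ρ + [(β+1/2)|x|² - n]u²ρ - |x|²u^{p+1}ρ = 0; (iii) ∫(|x|²/4 - (n-2)/2)|∇u|²ρ + (β|x|²/4 - nβ/2)u²ρ - (|x|²/(2p+2) - n/(p+1))u^{p+1}ρ = 0. Then the combination (n/(p+1))·(i) - (1/(2(p+1)))·(ii) + (iii) yields ((n+2-(n-2)p)/(2p+2))∫|∇u|²ρ + ((p-1)/(4(p+1)))∫|x|²|∇u|²ρ = 0, and hence ∇u ≡ 0. -/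

import Mathlib

open RealInnerProductSpace MeasureTheory

set_option maxHeartbeats 1000000 in
theorem stmt_14 (n : ℕ) (hn : 2 ≤ n) (p : ℝ) (hp : 1 < p)
    (hp2 : 3 ≤ n → p < ((n : ℝ) + 2) / ((n : ℝ) - 2))
    (u : EuclideanSpace ℝ (Fin n) → ℝ) (hu_nonneg : ∀ x, 0 ≤ u x)
    (hu_smooth : ContDiff ℝ 2 u)
    (hint1 : Integrable (fun x : EuclideanSpace ℝ (Fin n) =>
      (1 + ‖x‖ ^ 2) * Real.exp (-‖x‖ ^ 2 / 4) * (u x) ^ (p + 1)))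
    (hint2 : Integrable (fun x : EuclideanSpace ℝ (Fin n) =>
      (1 + ‖x‖ ^ 2) * Real.exp (-‖x‖ ^ 2 / 4) * ‖gradient u x‖ ^ 2))
    (hint3 : Integrable (fun x : EuclideanSpace ℝ (Fin n) =>
      (1 + ‖x‖ ^ 2) * Real.exp (-‖x‖ ^ 2 / 4) * (u x) ^ 2))
    (hid1 : ∫ x : EuclideanSpace ℝ (Fin n),
      (Real.exp (-‖x‖ ^ 2 / 4) * ‖gradient u x‖ ^ 2
        + (1 / (p - 1)) * Real.exp (-‖x‖ ^ 2 / 4) * (u x) ^ 2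
        - Real.exp (-‖x‖ ^ 2 / 4) * (u x) ^ (p + 1)) = 0)
    (hid2 : ∫ x : EuclideanSpace ℝ (Fin n),
      (‖x‖ ^ 2 * ‖gradient u x‖ ^ 2 * Real.exp (-‖x‖ ^ 2 / 4)
        + (((1 / (p - 1)) + 1 / 2) * ‖x‖ ^ 2 - n) * (u x) ^ 2 * Real.exp (-‖x‖ ^ 2 / 4)
        - ‖x‖ ^ 2 * (u x) ^ (p + 1) * Real.exp (-‖x‖ ^ 2 / 4)) = 0)
    (hid3 : ∫ x : EuclideanSpace ℝ (Fin n),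
      ((‖x‖ ^ 2 / 4 - ((n : ℝ) - 2) / 2) * ‖gradient u x‖ ^ 2 * Real.exp (-‖x‖ ^ 2 / 4)
        + ((1 / (p - 1)) * ‖x‖ ^ 2 / 4 - (n : ℝ) * (1 / (p - 1)) / 2) * (u x) ^ 2
            * Real.exp (-‖x‖ ^ 2 / 4)
        - (‖x‖ ^ 2 / (2 * p + 2) - (n : ℝ) / (p + 1)) * (u x) ^ (p + 1)
            * Real.exp (-‖x‖ ^ 2 / 4)) = 0) :
    (((n : ℝ) + 2 - ((n : ℝ) - 2) * p) / (2 * p + 2))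
        * (∫ x : EuclideanSpace ℝ (Fin n),
            ‖gradient u x‖ ^ 2 * Real.exp (-‖x‖ ^ 2 / 4))
      + ((p - 1) / (4 * (p + 1)))
        * (∫ x : EuclideanSpace ℝ (Fin n),
            ‖x‖ ^ 2 * ‖gradient u x‖ ^ 2 * Real.exp (-‖x‖ ^ 2 / 4)) = 0 ∧
    ∀ x : EuclideanSpace ℝ (Fin n), gradient u x = 0 := by
  have hp1 : p - 1 ≠ 0 := by linarith
  have hpp1 : p + 1 ≠ 0 := by linarith
  -- continuity facts
  have hgc : Continuous (gradient u) := by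
    have hf : Continuous (fderiv ℝ u) := (hu_smooth.continuous_fderiv (by norm_num))
    exact (InnerProductSpace.toDual ℝ
      (EuclideanSpace ℝ (Fin n))).symm.continuous.comp hf
  have hcu : Continuous u := hu_smooth.continuous
  have hcE : Continuous (fun x : EuclideanSpace ℝ (Fin n) => u x ^ (p + 1)) := by
    have : Continuous (fun t : ℝ => t ^ (p + 1)) :=
      continuous_iff_continuousAt.2 fun t =>
        Real.continuousAt_rpow_const t (p + 1) (Or.inr (by linarith))
    exact this.comp hcu
  have hρ : Continuous (fun x : EuclideanSpace ℝ (Fin n) => Real.exp (-‖x‖ ^ 2 / 4)) :=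
    Real.continuous_exp.comp (((continuous_norm.pow 2).neg).div_const 4)
  have hnorm2 : Continuous (fun x : EuclideanSpace ℝ (Fin n) => ‖x‖ ^ 2) :=
    continuous_norm.pow 2
  have hAcont : Continuous (fun x : EuclideanSpace ℝ (Fin n) =>
      ‖gradient u x‖ ^ 2 * Real.exp (-‖x‖ ^ 2 / 4)) := ((hgc.norm.pow 2).mul hρ)
  have hBcont : Continuous (fun x : EuclideanSpace ℝ (Fin n) =>
      ‖x‖ ^ 2 * ‖gradient u x‖ ^ 2 * Real.exp (-‖x‖ ^ 2 / 4)) :=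
    ((hnorm2.mul (hgc.norm.pow 2)).mul hρ)
  -- six integrability facts
  have hIA : Integrable (fun x : EuclideanSpace ℝ (Fin n) =>
      ‖gradient u x‖ ^ 2 * Real.exp (-‖x‖ ^ 2 / 4)) := by
    refine hint2.mono' hAcont.aestronglyMeasurable ?_
    filter_upwards with x
    rw [Real.norm_eq_abs, abs_of_nonneg (by positivity)]
    nlinarith [mul_nonneg (mul_nonneg (sq_nonneg ‖x‖) (Real.exp_pos (-‖x‖^2/4)).le) (sq_nonneg ‖gradient u x‖), mul_nonneg (Real.exp_pos (-‖x‖^2/4)).le (sq_nonneg ‖gradient u x‖)]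
  have hIB : Integrable (fun x : EuclideanSpace ℝ (Fin n) =>
      ‖x‖ ^ 2 * ‖gradient u x‖ ^ 2 * Real.exp (-‖x‖ ^ 2 / 4)) := by
    refine hint2.mono' hBcont.aestronglyMeasurable ?_
    filter_upwards with x
    rw [Real.norm_eq_abs, abs_of_nonneg (by positivity)]
    nlinarith [mul_nonneg (mul_nonneg (sq_nonneg ‖x‖) (Real.exp_pos (-‖x‖^2/4)).le) (sq_nonneg ‖gradient u x‖), mul_nonneg (Real.exp_pos (-‖x‖^2/4)).le (sq_nonneg ‖gradient u x‖)]
  have hIC : Integrable (fun x : EuclideanSpace ℝ (Fin n) =>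
      u x ^ 2 * Real.exp (-‖x‖ ^ 2 / 4)) := by
    refine hint3.mono' ((hcu.pow 2).mul hρ).aestronglyMeasurable ?_
    filter_upwards with x
    rw [Real.norm_eq_abs, abs_of_nonneg (by positivity)]
    nlinarith [mul_nonneg (mul_nonneg (sq_nonneg ‖x‖) (Real.exp_pos (-‖x‖^2/4)).le) (sq_nonneg (u x)), mul_nonneg (Real.exp_pos (-‖x‖^2/4)).le (sq_nonneg (u x))]
  have hID : Integrable (fun x : EuclideanSpace ℝ (Fin n) =>
      ‖x‖ ^ 2 * u x ^ 2 * Real.exp (-‖x‖ ^ 2 / 4)) := by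
    refine hint3.mono' ((hnorm2.mul (hcu.pow 2)).mul hρ).aestronglyMeasurable ?_
    filter_upwards with x
    rw [Real.norm_eq_abs, abs_of_nonneg (by positivity)]
    nlinarith [mul_nonneg (mul_nonneg (sq_nonneg ‖x‖) (Real.exp_pos (-‖x‖^2/4)).le) (sq_nonneg (u x)), mul_nonneg (Real.exp_pos (-‖x‖^2/4)).le (sq_nonneg (u x))]
  have hEpos : ∀ x : EuclideanSpace ℝ (Fin n), 0 ≤ u x ^ (p + 1) := fun x =>
    Real.rpow_nonneg (hu_nonneg x) _
  have hIE : Integrable (fun x : EuclideanSpace ℝ (Fin n) =>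
      u x ^ (p + 1) * Real.exp (-‖x‖ ^ 2 / 4)) := by
    refine hint1.mono' ((hcE.mul hρ).aestronglyMeasurable) ?_
    filter_upwards with x
    rw [Real.norm_eq_abs, abs_of_nonneg (mul_nonneg (hEpos x) (Real.exp_pos _).le)]
    nlinarith [mul_nonneg (mul_nonneg (sq_nonneg ‖x‖) (Real.exp_pos (-‖x‖^2/4)).le) (hEpos x), mul_nonneg (Real.exp_pos (-‖x‖^2/4)).le (hEpos x)]
  have hIF : Integrable (fun x : EuclideanSpace ℝ (Fin n) =>
      ‖x‖ ^ 2 * u x ^ (p + 1) * Real.exp (-‖x‖ ^ 2 / 4)) := by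
    refine hint1.mono' (((hnorm2.mul hcE).mul hρ).aestronglyMeasurable) ?_
    filter_upwards with x
    rw [Real.norm_eq_abs, abs_of_nonneg (mul_nonneg (mul_nonneg (sq_nonneg _) (hEpos x)) (Real.exp_pos _).le)]
    nlinarith [mul_nonneg (mul_nonneg (sq_nonneg ‖x‖) (Real.exp_pos (-‖x‖^2/4)).le) (hEpos x), mul_nonneg (Real.exp_pos (-‖x‖^2/4)).le (hEpos x)]
  -- canonical split of hid1
  have i11 : Integrable (fun x : EuclideanSpace ℝ (Fin n) => ‖gradient u x‖ ^ 2 * Real.exp (-‖x‖ ^ 2 / 4) + 1 / (p - 1) * (u x ^ 2 * Real.exp (-‖x‖ ^ 2 / 4))) volume :=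
    hIA.add (hIC.const_mul _)
  have h1 : (∫ x : EuclideanSpace ℝ (Fin n), ‖gradient u x‖ ^ 2 * Real.exp (-‖x‖ ^ 2 / 4)) + 1 / (p - 1) * (∫ x : EuclideanSpace ℝ (Fin n), u x ^ 2 * Real.exp (-‖x‖ ^ 2 / 4)) - (∫ x : EuclideanSpace ℝ (Fin n), u x ^ (p + 1) * Real.exp (-‖x‖ ^ 2 / 4)) = 0 := by
    have e : (∫ x : EuclideanSpace ℝ (Fin n), (‖gradient u x‖ ^ 2 * Real.exp (-‖x‖ ^ 2 / 4) + 1 / (p - 1) * (u x ^ 2 * Real.exp (-‖x‖ ^ 2 / 4)) - (u x ^ (p + 1) * Real.exp (-‖x‖ ^ 2 / 4))))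
        = (∫ x : EuclideanSpace ℝ (Fin n), ‖gradient u x‖ ^ 2 * Real.exp (-‖x‖ ^ 2 / 4)) + 1 / (p - 1) * (∫ x : EuclideanSpace ℝ (Fin n), u x ^ 2 * Real.exp (-‖x‖ ^ 2 / 4)) - (∫ x : EuclideanSpace ℝ (Fin n), u x ^ (p + 1) * Real.exp (-‖x‖ ^ 2 / 4)) := by
      rw [integral_sub i11 hIE, integral_add hIA (hIC.const_mul (1 / (p - 1))),
        integral_const_mul]
    rw [← e, ← hid1]
    exact integral_congr_ae (Filter.Eventually.of_forall fun x => by ring)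
  have i21 : Integrable (fun x : EuclideanSpace ℝ (Fin n) => ‖x‖ ^ 2 * ‖gradient u x‖ ^ 2 * Real.exp (-‖x‖ ^ 2 / 4) + (1 / (p - 1) + 1 / 2) * (‖x‖ ^ 2 * u x ^ 2 * Real.exp (-‖x‖ ^ 2 / 4))) volume :=
    hIB.add (hID.const_mul _)
  have i22 : Integrable (fun x : EuclideanSpace ℝ (Fin n) => ‖x‖ ^ 2 * ‖gradient u x‖ ^ 2 * Real.exp (-‖x‖ ^ 2 / 4) + (1 / (p - 1) + 1 / 2) * (‖x‖ ^ 2 * u x ^ 2 * Real.exp (-‖x‖ ^ 2 / 4)) - (n : ℝ) * (u x ^ 2 * Real.exp (-‖x‖ ^ 2 / 4))) volume :=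
    i21.sub (hIC.const_mul _)
  have h2 : (∫ x : EuclideanSpace ℝ (Fin n), ‖x‖ ^ 2 * ‖gradient u x‖ ^ 2 * Real.exp (-‖x‖ ^ 2 / 4)) + (1 / (p - 1) + 1 / 2) * (∫ x : EuclideanSpace ℝ (Fin n), ‖x‖ ^ 2 * u x ^ 2 * Real.exp (-‖x‖ ^ 2 / 4)) - (n : ℝ) * (∫ x : EuclideanSpace ℝ (Fin n), u x ^ 2 * Real.exp (-‖x‖ ^ 2 / 4)) - (∫ x : EuclideanSpace ℝ (Fin n), ‖x‖ ^ 2 * u x ^ (p + 1) * Real.exp (-‖x‖ ^ 2 / 4)) = 0 := by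
    have e : (∫ x : EuclideanSpace ℝ (Fin n), (‖x‖ ^ 2 * ‖gradient u x‖ ^ 2 * Real.exp (-‖x‖ ^ 2 / 4) + (1 / (p - 1) + 1 / 2) * (‖x‖ ^ 2 * u x ^ 2 * Real.exp (-‖x‖ ^ 2 / 4)) - (n : ℝ) * (u x ^ 2 * Real.exp (-‖x‖ ^ 2 / 4)) - (‖x‖ ^ 2 * u x ^ (p + 1) * Real.exp (-‖x‖ ^ 2 / 4))))
        = (∫ x : EuclideanSpace ℝ (Fin n), ‖x‖ ^ 2 * ‖gradient u x‖ ^ 2 * Real.exp (-‖x‖ ^ 2 / 4)) + (1 / (p - 1) + 1 / 2) * (∫ x : EuclideanSpace ℝ (Fin n), ‖x‖ ^ 2 * u x ^ 2 * Real.exp (-‖x‖ ^ 2 / 4)) - (n : ℝ) * (∫ x : EuclideanSpace ℝ (Fin n), u x ^ 2 * Real.exp (-‖x‖ ^ 2 / 4)) - (∫ x : EuclideanSpace ℝ (Fin n), ‖x‖ ^ 2 * u x ^ (p + 1) * Real.exp (-‖x‖ ^ 2 / 4)) := by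
      rw [integral_sub i22 hIF, integral_sub i21 (hIC.const_mul ((n : ℝ))),
        integral_add hIB (hID.const_mul ((1 / (p - 1) + 1 / 2))), integral_const_mul,
        integral_const_mul]
    rw [← e, ← hid2]
    exact integral_congr_ae (Filter.Eventually.of_forall fun x => by ring)
  have i31 : Integrable (fun x : EuclideanSpace ℝ (Fin n) => 1 / 4 * (‖x‖ ^ 2 * ‖gradient u x‖ ^ 2 * Real.exp (-‖x‖ ^ 2 / 4)) - ((n : ℝ) - 2) / 2 * (‖gradient u x‖ ^ 2 * Real.exp (-‖x‖ ^ 2 / 4))) volume :=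
    (hIB.const_mul _).sub (hIA.const_mul _)
  have i32 : Integrable (fun x : EuclideanSpace ℝ (Fin n) => 1 / 4 * (‖x‖ ^ 2 * ‖gradient u x‖ ^ 2 * Real.exp (-‖x‖ ^ 2 / 4)) - ((n : ℝ) - 2) / 2 * (‖gradient u x‖ ^ 2 * Real.exp (-‖x‖ ^ 2 / 4)) + 1 / (p - 1) / 4 * (‖x‖ ^ 2 * u x ^ 2 * Real.exp (-‖x‖ ^ 2 / 4))) volume :=
    i31.add (hID.const_mul _)
  have i33 : Integrable (fun x : EuclideanSpace ℝ (Fin n) => 1 / 4 * (‖x‖ ^ 2 * ‖gradient u x‖ ^ 2 * Real.exp (-‖x‖ ^ 2 / 4)) - ((n : ℝ) - 2) / 2 * (‖gradient u x‖ ^ 2 * Real.exp (-‖x‖ ^ 2 / 4)) + 1 / (p - 1) / 4 * (‖x‖ ^ 2 * u x ^ 2 * Real.exp (-‖x‖ ^ 2 / 4)) - (n : ℝ) * (1 / (p - 1)) / 2 * (u x ^ 2 * Real.exp (-‖x‖ ^ 2 / 4))) volume :=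
    i32.sub (hIC.const_mul _)
  have i34 : Integrable (fun x : EuclideanSpace ℝ (Fin n) => 1 / 4 * (‖x‖ ^ 2 * ‖gradient u x‖ ^ 2 * Real.exp (-‖x‖ ^ 2 / 4)) - ((n : ℝ) - 2) / 2 * (‖gradient u x‖ ^ 2 * Real.exp (-‖x‖ ^ 2 / 4)) + 1 / (p - 1) / 4 * (‖x‖ ^ 2 * u x ^ 2 * Real.exp (-‖x‖ ^ 2 / 4)) - (n : ℝ) * (1 / (p - 1)) / 2 * (u x ^ 2 * Real.exp (-‖x‖ ^ 2 / 4)) - 1 / (2 * p + 2) * (‖x‖ ^ 2 * u x ^ (p + 1) * Real.exp (-‖x‖ ^ 2 / 4))) volume :=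
    i33.sub (hIF.const_mul _)
  have h3 : 1 / 4 * (∫ x : EuclideanSpace ℝ (Fin n), ‖x‖ ^ 2 * ‖gradient u x‖ ^ 2 * Real.exp (-‖x‖ ^ 2 / 4)) - ((n : ℝ) - 2) / 2 * (∫ x : EuclideanSpace ℝ (Fin n), ‖gradient u x‖ ^ 2 * Real.exp (-‖x‖ ^ 2 / 4)) + 1 / (p - 1) / 4 * (∫ x : EuclideanSpace ℝ (Fin n), ‖x‖ ^ 2 * u x ^ 2 * Real.exp (-‖x‖ ^ 2 / 4))
      - (n : ℝ) * (1 / (p - 1)) / 2 * (∫ x : EuclideanSpace ℝ (Fin n), u x ^ 2 * Real.exp (-‖x‖ ^ 2 / 4)) - 1 / (2 * p + 2) * (∫ x : EuclideanSpace ℝ (Fin n), ‖x‖ ^ 2 * u x ^ (p + 1) * Real.exp (-‖x‖ ^ 2 / 4))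
      + (n : ℝ) / (p + 1) * (∫ x : EuclideanSpace ℝ (Fin n), u x ^ (p + 1) * Real.exp (-‖x‖ ^ 2 / 4)) = 0 := by
    have e : (∫ x : EuclideanSpace ℝ (Fin n), (1 / 4 * (‖x‖ ^ 2 * ‖gradient u x‖ ^ 2 * Real.exp (-‖x‖ ^ 2 / 4)) - ((n : ℝ) - 2) / 2 * (‖gradient u x‖ ^ 2 * Real.exp (-‖x‖ ^ 2 / 4)) + 1 / (p - 1) / 4 * (‖x‖ ^ 2 * u x ^ 2 * Real.exp (-‖x‖ ^ 2 / 4)) - (n : ℝ) * (1 / (p - 1)) / 2 * (u x ^ 2 * Real.exp (-‖x‖ ^ 2 / 4)) - 1 / (2 * p + 2) * (‖x‖ ^ 2 * u x ^ (p + 1) * Real.exp (-‖x‖ ^ 2 / 4)) + (n : ℝ) / (p + 1) * (u x ^ (p + 1) * Real.exp (-‖x‖ ^ 2 / 4))))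
        = 1 / 4 * (∫ x : EuclideanSpace ℝ (Fin n), ‖x‖ ^ 2 * ‖gradient u x‖ ^ 2 * Real.exp (-‖x‖ ^ 2 / 4)) - ((n : ℝ) - 2) / 2 * (∫ x : EuclideanSpace ℝ (Fin n), ‖gradient u x‖ ^ 2 * Real.exp (-‖x‖ ^ 2 / 4)) + 1 / (p - 1) / 4 * (∫ x : EuclideanSpace ℝ (Fin n), ‖x‖ ^ 2 * u x ^ 2 * Real.exp (-‖x‖ ^ 2 / 4))
          - (n : ℝ) * (1 / (p - 1)) / 2 * (∫ x : EuclideanSpace ℝ (Fin n), u x ^ 2 * Real.exp (-‖x‖ ^ 2 / 4)) - 1 / (2 * p + 2) * (∫ x : EuclideanSpace ℝ (Fin n), ‖x‖ ^ 2 * u x ^ (p + 1) * Real.exp (-‖x‖ ^ 2 / 4))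
          + (n : ℝ) / (p + 1) * (∫ x : EuclideanSpace ℝ (Fin n), u x ^ (p + 1) * Real.exp (-‖x‖ ^ 2 / 4)) := by
      rw [integral_add i34 (hIE.const_mul _), integral_sub i33 (hIF.const_mul _),
        integral_sub i32 (hIC.const_mul _), integral_add i31 (hID.const_mul _),
        integral_sub (hIB.const_mul _) (hIA.const_mul _), integral_const_mul,
        integral_const_mul, integral_const_mul, integral_const_mul, integral_const_mul,
        integral_const_mul]
    rw [← e, ← hid3]
    exact integral_congr_ae (Filter.Eventually.of_forall fun x => by ring)
  -- the linear combination
  set A := ∫ x : EuclideanSpace ℝ (Fin n), ‖gradient u x‖ ^ 2 * Real.exp (-‖x‖ ^ 2 / 4) with hA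
  set B := ∫ x : EuclideanSpace ℝ (Fin n), ‖x‖ ^ 2 * ‖gradient u x‖ ^ 2 * Real.exp (-‖x‖ ^ 2 / 4) with hB
  have key : (((n : ℝ) + 2 - ((n : ℝ) - 2) * p) / (2 * p + 2)) * A
      + ((p - 1) / (4 * (p + 1))) * B = 0 := by
    linear_combination (norm := skip) ((n : ℝ) / (p + 1)) * h1 - (1 / (2 * (p + 1))) * h2 + h3
    field_simp
    ring
  refine ⟨key, ?_⟩
  -- positivity of coefficients
  have hc1 : 0 < ((n : ℝ) + 2 - ((n : ℝ) - 2) * p) / (2 * p + 2) := by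
    apply div_pos _ (by linarith)
    rcases eq_or_lt_of_le hn with h | h
    · rw [← h]; norm_num
    · have h3n : 3 ≤ n := h
      have hnr : (0:ℝ) < (n : ℝ) - 2 := by
        have : (3:ℝ) ≤ (n:ℝ) := by exact_mod_cast h3n
        linarith
      have hlt := (lt_div_iff₀ hnr).mp (hp2 h3n)
      nlinarith [hlt]
  have hc2 : 0 < (p - 1) / (4 * (p + 1)) := div_pos (by linarith) (by linarith)
  have hA0 : 0 ≤ A := integral_nonneg fun x => by positivity
  have hB0 : 0 ≤ B := integral_nonneg fun x => by positivity
  have hAz : A = 0 := by nlinarith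
  -- from A = 0 to gradient = 0
  have hfz : (fun x : EuclideanSpace ℝ (Fin n) =>
      ‖gradient u x‖ ^ 2 * Real.exp (-‖x‖ ^ 2 / 4)) =ᵐ[volume] 0 :=
    (integral_eq_zero_iff_of_nonneg (fun x => by positivity) hIA).mp hAz
  have heq : (fun x : EuclideanSpace ℝ (Fin n) =>
      ‖gradient u x‖ ^ 2 * Real.exp (-‖x‖ ^ 2 / 4)) = 0 :=
    (hAcont.ae_eq_iff_eq volume continuous_const).mp hfz
  intro x
  have hx := congrFun heq x
  simp only [Pi.zero_apply] at hx
  have : ‖gradient u x‖ ^ 2 = 0 := by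
    have he := Real.exp_pos (-‖x‖ ^ 2 / 4)
    exact by nlinarith [sq_nonneg ‖gradient u x‖]
  simpa [norm_eq_zero] using pow_eq_zero_iff (n := 2) (by norm_num) |>.mp this
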